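/- Growth bound along a segment for a holomorphic function with small derivative: Let q ≥ 1 be an integer, let y₁, y₂ ∈ ℂ, and let φ be a holomorphic function on an open set containing the segment [y₂, y₁] = {t·y₁ + (1−t)·y₂ : t ∈ [0,1]} such that |φ'(z)| ≤ 1 and |φ'(z)| ≤ |φ(z)|^{2q} for every z on the segment. Then |φ(y₁) − φ(y₂)| ≤ |y₁ − y₂| · (|φ(y₂)| + |y₁ − y₂|)^{2q}. -/

import Mathlib

open Metric Filter Topology Set

noncomputable section

/-- **Growth bound along a segment for a holomorphic function with small derivative.** If `φ`
is holomorphic on an open set containing the segment `[y₂, y₁]` with `|φ'| ≤ 1` and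
`|φ'| ≤ |φ|^{2q}` on the segment, then
`|φ(y₁) − φ(y₂)| ≤ |y₁ − y₂|·(|φ(y₂)| + |y₁ − y₂|)^{2q}`. -/
theorem segment_growth_bound (q : ℕ) (hq : 1 ≤ q) (y₁ y₂ : ℂ) (U : Set ℂ) (hU : IsOpen U)
    (hseg : segment ℝ y₂ y₁ ⊆ U) (φ : ℂ → ℂ) (hφ : DifferentiableOn ℂ φ U)
    (hd1 : ∀ z ∈ segment ℝ y₂ y₁, ‖deriv φ z‖ ≤ 1)
    (hd2 : ∀ z ∈ segment ℝ y₂ y₁, ‖deriv φ z‖ ≤ ‖φ z‖ ^ (2 * q)) :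
    ‖φ y₁ - φ y₂‖ ≤
      ‖y₁ - y₂‖ * (‖φ y₂‖ + ‖y₁ - y₂‖) ^ (2 * q) := by
  set s := segment ℝ y₂ y₁ with hs
  have hconv : Convex ℝ s := convex_segment _ _
  set f' : ℂ → ℂ →L[ℂ] ℂ := fun z => (1 : ℂ →L[ℂ] ℂ).smulRight (deriv φ z) with hf'
  have hder : ∀ z ∈ s, HasFDerivWithinAt φ (f' z) s z := by
    intro z hz
    have := (hφ.differentiableAt (hU.mem_nhds (hseg hz))).hasDerivAt
    exact this.hasFDerivAt.hasFDerivWithinAt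
  have hnorm : ∀ z, ‖f' z‖ = ‖deriv φ z‖ := by
    intro z
    simp [hf', ContinuousLinearMap.norm_smulRight_apply]
  -- First: |φ z - φ y₂| ≤ |z - y₂| ≤ |y₁ - y₂| on the segment
  have hdist : ∀ z ∈ s, ‖z - y₂‖ ≤ ‖y₁ - y₂‖ := by
    intro z hz
    rcases hz with ⟨a, b, ha, hb, hab, rfl⟩
    have : a • y₂ + b • y₁ - y₂ = b • (y₁ - y₂) := by
      have ha1 : a = 1 - b := by linarith
      rw [ha1]; module
    rw [this]
    simp only [norm_smul, Real.norm_eq_abs, abs_of_nonneg hb]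
    nlinarith [norm_nonneg (y₁ - y₂)]
  have hstep1 : ∀ z ∈ s, ‖φ z - φ y₂‖ ≤ ‖y₁ - y₂‖ := by
    intro z hz
    have h1 : ‖φ z - φ y₂‖ ≤ 1 * ‖z - y₂‖ :=
      hconv.norm_image_sub_le_of_norm_hasFDerivWithin_le hder
        (fun x hx => by rw [hnorm]; exact hd1 x hx) (left_mem_segment ℝ y₂ y₁) hz
    calc ‖φ z - φ y₂‖ ≤ 1 * ‖z - y₂‖ := h1
      _ = ‖z - y₂‖ := one_mul _
      _ ≤ ‖y₁ - y₂‖ := hdist z hz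
  -- Hence |φ z| ≤ |φ y₂| + |y₁ - y₂|, so |φ' z| ≤ C := (|φ y₂| + |y₁ - y₂|)^{2q}
  set C : ℝ := (‖φ y₂‖ + ‖y₁ - y₂‖) ^ (2 * q) with hC
  have hbound : ∀ z ∈ s, ‖f' z‖ ≤ C := by
    intro z hz
    rw [hnorm]
    refine (hd2 z hz).trans ?_
    apply pow_le_pow_left₀ (norm_nonneg _)
    calc ‖φ z‖ = ‖φ y₂ + (φ z - φ y₂)‖ := by ring_nf
      _ ≤ ‖φ y₂‖ + ‖φ z - φ y₂‖ := norm_add_le _ _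
      _ ≤ ‖φ y₂‖ + ‖y₁ - y₂‖ := by linarith [hstep1 z hz]
  have := hconv.norm_image_sub_le_of_norm_hasFDerivWithin_le hder hbound
    (left_mem_segment ℝ y₂ y₁) (right_mem_segment ℝ y₂ y₁)
  calc ‖φ y₁ - φ y₂‖ ≤ C * ‖y₁ - y₂‖ := this
    _ = ‖y₁ - y₂‖ * C := by rw [mul_comm]
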